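/- For all integers n, k > 2, every tree with n vertices either has at least n/(4k) leaves or contains a collection of at least n/(4k) pairwise vertex-disjoint bare paths, each of length k. -/

import Mathlib

/-- A path (walk) in `T` is *bare* if each of its interior vertices (vertices of its
support other than the two endvertices) has degree exactly `2` in `T`. -/
def IsBareWalk {V : Type*} (T : SimpleGraph V) {u v : V} (p : T.Walk u v) : Prop :=
  ∀ w ∈ p.support, w ≠ u → w ≠ v → (T.neighborSet w).ncard = 2

namespace BareAux

open SimpleGraph

variable {V : Type*} [Fintype V] [DecidableEq V] {T : SimpleGraph V}

/-- every interior vertex of a path has two distinct neighbors on the path -/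
lemma interior_two_nbrs {w : V} :
    ∀ {u v : V} (p : T.Walk u v), p.IsPath → w ∈ p.support → w ≠ u → w ≠ v →
      ∃ a b, a ≠ b ∧ a ∈ p.support ∧ b ∈ p.support ∧ T.Adj w a ∧ T.Adj w b := by
  intro u v p
  induction p with
  | nil =>
    intro _ hw hu _
    simp only [Walk.support_nil, List.mem_singleton] at hw
    exact absurd hw hu
  | @cons u u' v h q ih =>
    intro hp hw hu hv
    rw [Walk.support_cons] at hw
    rcases List.mem_cons.mp hw with rfl | hw'
    · exact absurd rfl hu
    by_cases hwu' : w = u'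
    · subst hwu'
      cases q with
      | nil => exact absurd rfl hv
      | @cons _ b _ h' q' =>
        have hbq : b ∈ (Walk.cons h' q').support := by
          rw [Walk.support_cons]; exact List.mem_cons_of_mem _ q'.start_mem_support
        have hu_not : u ∉ (Walk.cons h' q').support := ((Walk.cons_isPath_iff h _).mp hp).2
        refine ⟨u, b, ?_, by simp, ?_, h.symm, h'⟩
        · intro heq; exact hu_not (heq ▸ hbq)
        · rw [Walk.support_cons]; exact List.mem_cons_of_mem _ hbq
    · obtain ⟨a, b, hab, ha, hb, h1, h2⟩ :=
        ih ((Walk.cons_isPath_iff h q).mp hp).1 hw' hwu' hv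
      exact ⟨a, b, hab, by rw [Walk.support_cons]; exact List.mem_cons_of_mem _ ha,
        by rw [Walk.support_cons]; exact List.mem_cons_of_mem _ hb, h1, h2⟩

/-- a path whose vertices all have degree ≤ 2 is bare -/
lemma bare_of_small {u v : V} (p : T.Walk u v) (hp : p.IsPath)
    (hsmall : ∀ w ∈ p.support, (T.neighborSet w).ncard ≤ 2) : IsBareWalk T p := by
  intro w hw hwu hwv
  obtain ⟨a, b, hab, _, _, h1, h2⟩ := interior_two_nbrs p hp hw hwu hwv
  refine le_antisymm (hsmall w hw) ?_
  have hsub : ({a, b} : Set V) ⊆ T.neighborSet w := by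
    intro y hy
    rcases hy with rfl | hy
    · exact h1
    · rw [Set.mem_singleton_iff] at hy; subst hy; exact h2
  calc 2 = ({a, b} : Set V).ncard := (Set.ncard_pair hab).symm
    _ ≤ (T.neighborSet w).ncard := Set.ncard_le_ncard hsub (Set.toFinite _)

/-- in an acyclic graph, a neighbor of the start of a path lying on the path must
be the second vertex -/
lemma cyc (hA : T.IsAcyclic) {u x w : V} {p : T.Walk u w} (hp : p.IsPath)
    (h : T.Adj u x) (hx : x ∈ p.support) : x = p.getVert 1 := by
  have h1 : p.takeUntil x hx = Walk.cons h Walk.nil := by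
    have h12 := hA.path_unique ⟨p.takeUntil x hx, hp.takeUntil hx⟩
      ⟨Walk.cons h Walk.nil, by simp [h.ne]⟩
    exact congrArg Subtype.val h12
  have h2 := p.take_spec hx
  rw [h1, Walk.cons_append, Walk.nil_append] at h2
  rw [← h2, Walk.getVert_cons_succ, Walk.getVert_zero]

/-- every vertex of a connected graph on ≥ 2 vertices has a neighbor -/
lemma exists_nbr (hc : T.Connected) (h2 : 2 ≤ Fintype.card V) (v : V) :
    ∃ x, T.Adj v x := by
  obtain ⟨w, hw⟩ := Fintype.exists_ne_of_one_lt_card (by omega) v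
  obtain ⟨p⟩ := hc.preconnected v w
  have hnil : ¬ p.Nil := Walk.not_nil_of_ne (Ne.symm hw)
  exact ⟨p.getVert 1, p.adj_snd hnil⟩

lemma one_le_deg (hc : T.Connected) (h2 : 2 ≤ Fintype.card V) (v : V) :
    1 ≤ (T.neighborSet v).ncard := by
  obtain ⟨x, hx⟩ := exists_nbr hc h2 v
  exact (Set.ncard_pos (Set.toFinite _)).mpr ⟨x, hx⟩

/-- split a walk at position j -/
lemma exists_split (j : ℕ) :
    ∀ {u v : V} (p : T.Walk u v), j ≤ p.length →
      ∃ (w : V) (q : T.Walk u w) (r : T.Walk w v), q.append r = p ∧ q.length = j := by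
  induction j with
  | zero => exact fun p _ => ⟨_, Walk.nil, p, Walk.nil_append p, rfl⟩
  | succ j ih =>
    intro u v p hp
    cases p with
    | nil => simp at hp
    | cons h p' =>
      obtain ⟨w, q, r, hqr, hq⟩ := ih p' (by simpa using hp)
      exact ⟨w, Walk.cons h q, r, by rw [Walk.cons_append, hqr], by simp [hq]⟩

/-- chop a path into disjoint segments of length exactly k -/
lemma chop {k : ℕ} (hk : 1 ≤ k) :
    ∀ (N : ℕ) {u v : V} (p : T.Walk u v), p.length ≤ N → p.IsPath →
      ∃ l : List ((a : V) × (b : V) × T.Walk a b),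
        (∀ s ∈ l, s.2.2.IsPath ∧ s.2.2.length = k ∧ ∀ w ∈ s.2.2.support, w ∈ p.support) ∧
        List.Pairwise (fun s t => List.Disjoint s.2.2.support t.2.2.support) l ∧
        p.length + 1 ≤ l.length * (k + 1) + k := by
  intro N
  induction N with
  | zero =>
    intro u v p hN _
    refine ⟨[], by simp, by simp, ?_⟩
    simp only [List.length_nil, zero_mul, zero_add]
    omega
  | succ N ih =>
    intro u v p hN hp
    by_cases hlk : p.length < k
    · exact ⟨[], by simp, by simp, by simpa using hlk⟩
    push_neg at hlk
    obtain ⟨w, q, r, hqr, hqlen⟩ := exists_split k p hlk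
    cases r with
    | nil =>
      rw [Walk.append_nil] at hqr
      refine ⟨[⟨u, v, q⟩], ?_, by simp, ?_⟩
      · intro s hs
        rw [List.mem_singleton] at hs
        subst hs
        exact ⟨hqr ▸ hp, hqlen, fun x hx => hqr ▸ hx⟩
      · simp only [List.length_singleton, one_mul]
        have : p.length = k := by rw [← hqr, hqlen]
        omega
    | @cons _ w' _ h r' =>
      have hsup : p.support = q.support ++ r'.support := by
        rw [← hqr, Walk.support_append, Walk.support_cons, List.tail_cons]
      have hnodup : (q.support ++ r'.support).Nodup := by
        rw [← hsup]; exact hp.support_nodup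
      obtain ⟨hnq, hnr, hdisj⟩ := List.nodup_append.mp hnodup
      have hqpath : q.IsPath := (Walk.isPath_def _).mpr hnq
      have hrpath : r'.IsPath := (Walk.isPath_def _).mpr hnr
      have hplen : p.length = k + 1 + r'.length := by
        rw [← hqr, Walk.length_append, hqlen, Walk.length_cons]; omega
      obtain ⟨l', hl'p, hl'pw, hl'c⟩ := ih r' (by omega) hrpath
      refine ⟨⟨u, w, q⟩ :: l', ?_, ?_, ?_⟩
      · intro s hs
        rcases List.mem_cons.mp hs with rfl | hs
        · exact ⟨hqpath, hqlen, fun x hx => by rw [hsup]; exact List.mem_append_left _ hx⟩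
        · obtain ⟨h1, h2, h3⟩ := hl'p s hs
          exact ⟨h1, h2, fun x hx => by rw [hsup]; exact List.mem_append_right _ (h3 x hx)⟩
      · rw [List.pairwise_cons]
        refine ⟨?_, hl'pw⟩
        intro t ht a ha hat
        exact hdisj a ha a ((hl'p t ht).2.2 a hat) rfl
      · rw [List.length_cons]
        have : (l'.length + 1) * (k + 1) = l'.length * (k + 1) + (k + 1) :=
          Nat.succ_mul _ _
        omega

/-- existence of a maximal path inside a finset -/
lemma exists_max_path (S : Finset V) (hS : S.Nonempty) :
    ∃ (u v : V) (p : T.Walk u v), p.IsPath ∧ (∀ w ∈ p.support, w ∈ S) ∧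
      (∀ x, T.Adj u x → x ∈ S → x ∈ p.support) ∧
      (∀ x, T.Adj v x → x ∈ S → x ∈ p.support) := by
  classical
  obtain ⟨u₀, hu₀⟩ := hS
  set lenSet : Set ℕ :=
    {ℓ | ∃ (u v : V) (p : T.Walk u v), p.IsPath ∧ (∀ w ∈ p.support, w ∈ S) ∧ p.length = ℓ}
    with hlenSet
  have hne : lenSet.Nonempty := by
    refine ⟨0, u₀, u₀, Walk.nil, by simp, ?_, rfl⟩
    intro w hw
    simp only [Walk.support_nil, List.mem_singleton] at hw
    exact hw ▸ hu₀
  have hbdd : BddAbove lenSet := by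
    refine ⟨Fintype.card V, ?_⟩
    rintro ℓ ⟨u, v, p, hp, _, hl⟩
    exact hl ▸ hp.length_lt.le
  obtain ⟨u, v, p, hp, hsupp, hlen⟩ := Nat.sSup_mem hne hbdd
  have maxi : ∀ (a b : V) (q : T.Walk a b), q.IsPath → (∀ w ∈ q.support, w ∈ S) →
      q.length ≤ p.length := by
    intro a b q hq hqs
    rw [hlen]
    exact le_csSup hbdd ⟨a, b, q, hq, hqs, rfl⟩
  refine ⟨u, v, p, hp, hsupp, ?_, ?_⟩
  · intro x hx hxS
    by_contra hxs
    have : (Walk.cons hx.symm p).length ≤ p.length := by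
      refine maxi _ _ _ (hp.cons hxs) ?_
      intro w hw
      rw [Walk.support_cons] at hw
      rcases List.mem_cons.mp hw with rfl | hw
      · exact hxS
      · exact hsupp _ hw
    simp [Walk.length_cons] at this
  · intro x hx hxS
    by_contra hxs
    have hxs' : x ∉ p.reverse.support := by
      rwa [Walk.support_reverse, List.mem_reverse]
    have : (Walk.cons hx.symm p.reverse).length ≤ p.length := by
      refine maxi _ _ _ (hp.reverse.cons hxs') ?_
      intro w hw
      rw [Walk.support_cons] at hw
      rcases List.mem_cons.mp hw with rfl | hw
      · exact hxS
      · rw [Walk.support_reverse, List.mem_reverse] at hw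
        exact hsupp _ hw
    simp [Walk.length_cons, Walk.length_reverse] at this

/-- feature-weight of a vertex: 1 for being a leaf, plus the number of
neighbors of degree ≥ 3 -/
noncomputable def fW (T : SimpleGraph V) (v : V) : ℕ :=
  (if (T.neighborSet v).ncard = 1 then 1 else 0) +
    (T.neighborSet v ∩ {x | 3 ≤ (T.neighborSet x).ncard}).ncard

/-- main peeling lemma -/
lemma peel (hT : T.IsTree) (hcard : 2 ≤ Fintype.card V) {k : ℕ} (hk : 1 ≤ k) :
    ∀ (N : ℕ) (S : Finset V), S.card ≤ N →
      (∀ v ∈ S, (T.neighborSet v).ncard ≤ 2) →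
      (∀ v ∈ S, ∀ x, T.Adj v x → x ∈ S ∨ 3 ≤ (T.neighborSet x).ncard) →
      ∃ l : List ((a : V) × (b : V) × T.Walk a b),
        (∀ s ∈ l, s.2.2.IsPath ∧ s.2.2.length = k ∧ ∀ w ∈ s.2.2.support, w ∈ S) ∧
        List.Pairwise (fun s t => List.Disjoint s.2.2.support t.2.2.support) l ∧
        2 * S.card ≤ 2 * (l.length * (k + 1)) + k * ∑ v ∈ S, fW T v := by
  intro N
  induction N with
  | zero =>
    intro S hS _ _
    have hS0 : S = ∅ := Finset.card_eq_zero.mp (Nat.le_zero.mp hS)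
    exact ⟨[], by simp, by simp, by simp [hS0]⟩
  | succ N ih =>
    intro S hSN hS2 hinv
    rcases S.eq_empty_or_nonempty with rfl | hSne
    · exact ⟨[], by simp, by simp, by simp⟩
    obtain ⟨u, v, p, hp, hsupp, hmaxu, hmaxv⟩ := exists_max_path (T := T) S hSne
    set Pfin : Finset V := p.support.toFinset with hPfin
    have hPS : ∀ w ∈ Pfin, w ∈ S := fun w hw => hsupp w (List.mem_toFinset.mp hw)
    have hPsub : Pfin ⊆ S := fun w hw => hPS w hw
    have hPcard : Pfin.card = p.length + 1 := by
      rw [hPfin, List.toFinset_card_of_nodup hp.support_nodup, Walk.length_support]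
    have hnbr1 : ∀ w : V, 1 ≤ (T.neighborSet w).ncard :=
      fun w => one_le_deg hT.isConnected hcard w
    -- no cross edges from the path to the rest of S
    have hnc : ∀ w ∈ p.support, ∀ x, T.Adj w x → x ∈ S → x ∈ p.support := by
      intro w hw x hadj hxS
      by_cases hwu : w = u
      · exact hmaxu x (hwu ▸ hadj) hxS
      by_cases hwv : w = v
      · exact hmaxv x (hwv ▸ hadj) hxS
      obtain ⟨a, b, hab, ha, hb, h1, h2⟩ := interior_two_nbrs p hp hw hwu hwv
      have hNw : ({a, b} : Set V) = T.neighborSet w := by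
        refine Set.eq_of_subset_of_ncard_le ?_ ?_ (Set.toFinite _)
        · intro y hy
          rcases hy with rfl | hy
          · exact h1
          · rw [Set.mem_singleton_iff] at hy; subst hy; exact h2
        · rw [Set.ncard_pair hab]
          exact hS2 w (hsupp w hw)
      have hx2 : x ∈ ({a, b} : Set V) := by rw [hNw]; exact hadj
      rcases hx2 with rfl | hx2
      · exact ha
      · rw [Set.mem_singleton_iff] at hx2; subst hx2; exact hb
    -- feature count of the path component
    have hfeat : 2 ≤ ∑ w ∈ Pfin, fW T w := by
      by_cases hlen0 : p.length = 0
      · have hnil : p.Nil := Walk.nil_iff_length_eq.mpr hlen0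
        have hsup1 : p.support = [u] := Walk.nil_iff_support_eq.mp hnil
        have hP1 : Pfin = {u} := by rw [hPfin, hsup1]; simp
        rw [hP1, Finset.sum_singleton]
        have hallbig : T.neighborSet u ∩ {x | 3 ≤ (T.neighborSet x).ncard}
            = T.neighborSet u := by
          refine Set.inter_eq_self_of_subset_left ?_
          intro x hx
          rcases hinv u (hsupp u p.start_mem_support) x hx with hxS | hbig
          · exfalso
            have hxsup := hmaxu x hx hxS
            rw [hsup1, List.mem_singleton] at hxsup
            exact T.loopless.irrefl u (hxsup ▸ hx)
          · exact hbig
        unfold fW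
        rw [hallbig]
        have h1 := hnbr1 u
        have h2 := hS2 u (hsupp u p.start_mem_support)
        by_cases hcase : (T.neighborSet u).ncard = 1
        · simp [hcase]
        · rw [if_neg hcase]; omega
      · have huv : u ≠ v := by
          intro h
          subst h
          cases p with
          | nil => exact hlen0 rfl
          | cons h q =>
            exact ((Walk.cons_isPath_iff h q).mp hp).2 q.end_mem_support
        have hend : ∀ (a b : V) (q : T.Walk a b), q.IsPath →
            (∀ w ∈ q.support, w ∈ S) → (∀ x, T.Adj a x → x ∈ S → x ∈ q.support) →
            1 ≤ fW T a := by
          intro a b q hq hqs hqmax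
          by_cases h1 : (T.neighborSet a).ncard = 1
          · unfold fW; rw [if_pos h1]; omega
          have h2 : (T.neighborSet a).ncard = 2 :=
            le_antisymm (hS2 a (hqs a q.start_mem_support)) (by have := hnbr1 a; omega)
          rcases Set.eq_empty_or_nonempty
              (T.neighborSet a ∩ {x | 3 ≤ (T.neighborSet x).ncard}) with hemp | hnem
          · exfalso
            have hsub : T.neighborSet a ⊆ {q.getVert 1} := by
              intro x hx
              have hxnb : ¬ 3 ≤ (T.neighborSet x).ncard := by
                intro hbig
                exact Set.notMem_empty x (hemp ▸ (⟨hx, hbig⟩ :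
                  x ∈ T.neighborSet a ∩ {x | 3 ≤ (T.neighborSet x).ncard}))
              have hxS : x ∈ S :=
                (hinv a (hqs a q.start_mem_support) x hx).resolve_right hxnb
              have hxsup := hqmax x hx hxS
              have := cyc hT.IsAcyclic hq hx hxsup
              exact this ▸ rfl
            have := Set.ncard_le_ncard hsub (Set.finite_singleton _)
            rw [Set.ncard_singleton] at this
            omega
          · have hpos : 0 < (T.neighborSet a ∩
                {x | 3 ≤ (T.neighborSet x).ncard}).ncard :=
              (Set.ncard_pos (Set.toFinite _)).mpr hnem
            unfold fW
            omega
        have h1u := hend u v p hp hsupp hmaxu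
        have h1v : 1 ≤ fW T v := by
          refine hend v u p.reverse hp.reverse ?_ ?_
          · intro w hw
            rw [Walk.support_reverse, List.mem_reverse] at hw
            exact hsupp w hw
          · intro x hx hxS
            rw [Walk.support_reverse, List.mem_reverse]
            exact hmaxv x hx hxS
        have hsub : ({u, v} : Finset V) ⊆ Pfin := by
          intro w hw
          rcases Finset.mem_insert.mp hw with rfl | hw
          · exact List.mem_toFinset.mpr p.start_mem_support
          · rw [Finset.mem_singleton] at hw; subst hw
            exact List.mem_toFinset.mpr p.end_mem_support
        calc 2 = 1 + 1 := rfl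
          _ ≤ fW T u + fW T v := Nat.add_le_add h1u h1v
          _ = ∑ w ∈ ({u, v} : Finset V), fW T w := (Finset.sum_pair huv).symm
          _ ≤ ∑ w ∈ Pfin, fW T w :=
            Finset.sum_le_sum_of_subset hsub
    -- chop the path
    obtain ⟨lP, hlPp, hlPpw, hlPc⟩ := chop hk p.length p le_rfl hp
    -- recurse on the rest
    set S' : Finset V := S \ Pfin with hS'def
    have hS'card : S'.card + Pfin.card = S.card := Finset.card_sdiff_add_card_eq_card hPsub
    have hPne : 0 < Pfin.card := by
      rw [Finset.card_pos]
      exact ⟨u, List.mem_toFinset.mpr p.start_mem_support⟩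
    have hS'N : S'.card ≤ N := by omega
    have hS'sub : S' ⊆ S := Finset.sdiff_subset
    have hS'inv : ∀ v' ∈ S', ∀ x, T.Adj v' x → x ∈ S' ∨ 3 ≤ (T.neighborSet x).ncard := by
      intro a ha x hadj
      obtain ⟨haS, haP⟩ := Finset.mem_sdiff.mp ha
      rcases hinv a haS x hadj with hxS | hbig
      · left
        rw [Finset.mem_sdiff]
        refine ⟨hxS, ?_⟩
        intro hxP
        exact haP (List.mem_toFinset.mpr
          (hnc x (List.mem_toFinset.mp hxP) a hadj.symm haS))
      · right; exact hbig
    obtain ⟨l', hl'p, hl'pw, hl'c⟩ := ih S' hS'N (fun w hw => hS2 w (hS'sub hw)) hS'inv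
    refine ⟨lP ++ l', ?_, ?_, ?_⟩
    · intro s hs
      rcases List.mem_append.mp hs with hs | hs
      · obtain ⟨h1, h2, h3⟩ := hlPp s hs
        exact ⟨h1, h2, fun x hx => hsupp x (h3 x hx)⟩
      · obtain ⟨h1, h2, h3⟩ := hl'p s hs
        exact ⟨h1, h2, fun x hx => hS'sub (h3 x hx)⟩
    · rw [List.pairwise_append]
      refine ⟨hlPpw, hl'pw, ?_⟩
      intro s hs t ht a has hat
      have haP : a ∈ Pfin := List.mem_toFinset.mpr ((hlPp s hs).2.2 a has)
      have haS' : a ∈ S' := (hl'p t ht).2.2 a hat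
      exact (Finset.mem_sdiff.mp haS').2 haP
    · have e1 : ∑ x ∈ S', fW T x + ∑ x ∈ Pfin, fW T x = ∑ x ∈ S, fW T x :=
        Finset.sum_sdiff hPsub
      have h2k : k * 2 ≤ k * ∑ w ∈ Pfin, fW T w := Nat.mul_le_mul_left k hfeat
      have key : 2 * S.card ≤ 2 * ((lP.length + l'.length) * (k + 1))
          + k * (∑ x ∈ S', fW T x + ∑ w ∈ Pfin, fW T w) := by
        have e2 : (lP.length + l'.length) * (k + 1)
            = lP.length * (k + 1) + l'.length * (k + 1) := add_mul _ _ _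
        have e3 : k * (∑ x ∈ S', fW T x + ∑ w ∈ Pfin, fW T w)
            = k * ∑ x ∈ S', fW T x + k * ∑ w ∈ Pfin, fW T w := Nat.mul_add _ _ _
        rw [e2, e3]
        have hc1 := hlPc
        have hc2 := hl'c
        omega
      rw [List.length_append, ← e1]
      exact key

end BareAux

open SimpleGraph BareAux

/-- For all integers `n, k > 2`, every tree with `n` vertices either has at least
`n/(4k)` leaves, or contains at least `n/(4k)` pairwise vertex-disjoint bare paths,
each of length `k`. -/
theorem statement_1 (n k : ℕ) (hn : 2 < n) (hk : 2 < k)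
    (T : SimpleGraph (Fin n)) (hT : T.IsTree) :
    (n : ℝ) / (4 * k) ≤ ({v : Fin n | (T.neighborSet v).ncard = 1}).ncard ∨
    ∃ m : ℕ, (n : ℝ) / (4 * k) ≤ m ∧
      ∃ (u v : Fin m → Fin n) (P : (i : Fin m) → T.Walk (u i) (v i)),
        (∀ i, (P i).IsPath) ∧
        (∀ i, (P i).length = k) ∧
        (∀ i, IsBareWalk T (P i)) ∧
        (∀ i j, i ≠ j → List.Disjoint (P i).support (P j).support) := by
  classical
  haveI : DecidableRel T.Adj := Classical.decRel _
  have hcard2 : 2 ≤ Fintype.card (Fin n) := by rw [Fintype.card_fin]; omega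
  set d : Fin n → ℕ := fun v => (T.neighborSet v).ncard with hd
  set leavesF : Finset (Fin n) := Finset.univ.filter (fun v => d v = 1) with hleavesF
  have hLset : ({v : Fin n | (T.neighborSet v).ncard = 1}).ncard = leavesF.card := by
    rw [Set.ncard_eq_toFinset_card']
    congr 1
    ext v
    simp [hleavesF, hd]
  by_cases hcase : (n : ℝ) / (4 * k) ≤ leavesF.card
  · left; rw [hLset]; exact hcase
  right
  push_neg at hcase
  set A : Finset (Fin n) := Finset.univ.filter (fun v => d v ≤ 2) with hA
  set Bf : Finset (Fin n) := Finset.univ.filter (fun v => ¬ d v ≤ 2) with hBf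
  -- apply the peeling lemma
  obtain ⟨l, hprops, hpw, hcnt⟩ :=
    peel hT hcard2 (k := k) (by omega) A.card A le_rfl
      (fun v hv => (Finset.mem_filter.mp hv).2)
      (by
        intro v hv x hadj
        by_cases hx : d x ≤ 2
        · left; exact Finset.mem_filter.mpr ⟨Finset.mem_univ x, hx⟩
        · right; show 3 ≤ d x; omega)
  -- counting facts
  have hn1 : ∀ v, 1 ≤ d v := fun v => one_le_deg hT.isConnected hcard2 v
  have hsumdeg : ∑ v, d v + 2 = 2 * n := by
    have h1 : ∑ v : Fin n, T.degree v = 2 * T.edgeFinset.card :=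
      SimpleGraph.sum_degrees_eq_twice_card_edges T
    have h2 : T.edgeFinset.card + 1 = Fintype.card (Fin n) := hT.card_edgeFinset
    rw [Fintype.card_fin] at h2
    have h4 : ∑ v, d v = ∑ v : Fin n, T.degree v :=
      Finset.sum_congr rfl (fun v _ => by rw [hd]; exact Set.ncard_eq_toFinset_card' _)
    omega
  have hAB : A.card + Bf.card = n := by
    have := Finset.card_filter_add_card_filter_not
      (s := (Finset.univ : Finset (Fin n))) (p := fun v => d v ≤ 2)
    simpa [hA, hBf, Fintype.card_fin] using this
  have hsumAB : ∑ v ∈ A, d v + ∑ v ∈ Bf, d v = ∑ v, d v := by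
    rw [hA, hBf]
    exact Finset.sum_filter_add_sum_filter_not _ _ _
  -- sum of degrees over A
  have hAf1 : A.filter (fun v => d v = 1) = leavesF := by
    rw [hA, hleavesF, Finset.filter_filter]
    congr 1
    ext v
    constructor
    · rintro ⟨h1, h2⟩; exact h2
    · intro h; exact ⟨by omega, h⟩
  have hsumA : ∑ v ∈ A, d v + leavesF.card = 2 * A.card := by
    have hsplit : ∑ v ∈ A.filter (fun v => d v = 1), d v
        + ∑ v ∈ A.filter (fun v => ¬ d v = 1), d v = ∑ v ∈ A, d v :=
      Finset.sum_filter_add_sum_filter_not _ _ _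
    have hcardsplit : (A.filter (fun v => d v = 1)).card
        + (A.filter (fun v => ¬ d v = 1)).card = A.card :=
      Finset.card_filter_add_card_filter_not (p := fun v => d v = 1)
    have hs1 : ∑ v ∈ A.filter (fun v => d v = 1), d v
        = (A.filter (fun v => d v = 1)).card := by
      rw [Finset.sum_congr rfl (fun v hv => (Finset.mem_filter.mp hv).2)]
      simp
    have hs2 : ∑ v ∈ A.filter (fun v => ¬ d v = 1), d v
        = 2 * (A.filter (fun v => ¬ d v = 1)).card := by
      have : ∀ v ∈ A.filter (fun v => ¬ d v = 1), d v = 2 := by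
        intro v hv
        obtain ⟨hvA, hv1⟩ := Finset.mem_filter.mp hv
        have := (Finset.mem_filter.mp hvA).2
        have := hn1 v
        omega
      rw [Finset.sum_congr rfl this]
      simp [Nat.mul_comm]
    rw [hAf1] at hs1 hcardsplit hsplit
    omega
  have hB3 : 3 * Bf.card ≤ ∑ v ∈ Bf, d v := by
    have := Finset.card_nsmul_le_sum Bf d 3 (fun v hv => by
      have := (Finset.mem_filter.mp hv).2
      omega)
    simpa [Nat.mul_comm, smul_eq_mul] using this
  -- cross-edge double counting
  have hcross : ∑ v ∈ A, (T.neighborSet v ∩ {x | 3 ≤ d x}).ncard ≤ ∑ x ∈ Bf, d x := by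
    have step1 : ∀ v, (T.neighborSet v ∩ {x | 3 ≤ d x}).ncard
        = (Bf.filter (fun x => T.Adj v x)).card := by
      intro v
      rw [← Set.ncard_coe_finset]
      congr 1
      ext x
      simp only [Finset.coe_filter, Set.mem_inter_iff, SimpleGraph.mem_neighborSet,
        Set.mem_setOf_eq, hBf, Finset.mem_filter, Finset.mem_univ, true_and]
      constructor
      · rintro ⟨h1, h2⟩; exact ⟨by omega, h1⟩
      · rintro ⟨h1, h2⟩; exact ⟨h2, by omega⟩
    calc ∑ v ∈ A, (T.neighborSet v ∩ {x | 3 ≤ d x}).ncard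
        = ∑ v ∈ A, (Bf.filter (fun x => T.Adj v x)).card :=
          Finset.sum_congr rfl (fun v _ => step1 v)
      _ = ∑ v ∈ A, ∑ x ∈ Bf, if T.Adj v x then 1 else 0 := by
          refine Finset.sum_congr rfl (fun v _ => ?_)
          rw [Finset.card_filter]
      _ = ∑ x ∈ Bf, ∑ v ∈ A, if T.Adj v x then 1 else 0 := Finset.sum_comm
      _ = ∑ x ∈ Bf, (A.filter (fun v => T.Adj v x)).card := by
          refine Finset.sum_congr rfl (fun x _ => ?_)
          rw [Finset.card_filter]
      _ ≤ ∑ x ∈ Bf, d x := by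
          refine Finset.sum_le_sum (fun x _ => ?_)
          have hsub : A.filter (fun v => T.Adj v x) ⊆ T.neighborFinset x := by
            intro v hv
            rw [SimpleGraph.mem_neighborFinset]
            exact ((Finset.mem_filter.mp hv).2).symm
          calc (A.filter (fun v => T.Adj v x)).card ≤ (T.neighborFinset x).card :=
                Finset.card_le_card hsub
            _ = d x := by
                rw [hd]
                exact (Set.ncard_eq_toFinset_card' _).symm
  have hfWA : ∑ v ∈ A, fW T v
      = leavesF.card + ∑ v ∈ A, (T.neighborSet v ∩ {x | 3 ≤ d x}).ncard := by
    unfold fW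
    rw [Finset.sum_add_distrib]
    congr 1
    rw [← hAf1, Finset.card_filter]
  -- now the real arithmetic
  set m : ℕ := l.length with hm
  have hcnt' : 2 * A.card ≤ 2 * (m * (k + 1)) + k * ∑ v ∈ A, fW T v := hcnt
  -- derive combined nat facts
  have f8 : Bf.card + 2 ≤ leavesF.card := by
    -- 3b ≤ sB = sum - sA ; sA = 2a - L ; a + b = n ; sum = 2(n-1)
    omega
  have f9 : ∑ v ∈ A, fW T v + 2 ≤ 2 * leavesF.card + 2 * Bf.card := by
    omega
  have hk0 : (0:ℝ) ≤ (k:ℝ) := Nat.cast_nonneg k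
  have hck : (3:ℝ) ≤ (k:ℝ) := by exact_mod_cast hk
  have h4k : (0:ℝ) < 4 * (k:ℝ) := by linarith
  have hcaseR : (leavesF.card : ℝ) * (4 * k) < n := (lt_div_iff₀ h4k).mp hcase
  have hNle : (n : ℝ) / (4 * k) ≤ m := by
    rw [div_le_iff₀ h4k]
    have c7 : (2:ℝ) * A.card ≤ 2 * (m * (k + 1)) + k * ((∑ v ∈ A, fW T v : ℕ) : ℝ) := by
      exact_mod_cast hcnt'
    have c9 : ((∑ v ∈ A, fW T v : ℕ) : ℝ) + 2 ≤ 2 * leavesF.card + 2 * Bf.card := by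
      exact_mod_cast f9
    have c8 : (Bf.card : ℝ) + 2 ≤ leavesF.card := by exact_mod_cast f8
    have cAB : (A.card : ℝ) + Bf.card = n := by exact_mod_cast hAB
    have hL0 : (0:ℝ) ≤ leavesF.card := Nat.cast_nonneg _
    have hm0 : (0:ℝ) ≤ m := Nat.cast_nonneg _
    have hn0 : (0:ℝ) ≤ n := Nat.cast_nonneg _
    have q1 : (k:ℝ) * (((∑ v ∈ A, fW T v : ℕ) : ℝ) + 2)
        ≤ k * (2 * leavesF.card + 2 * Bf.card) := mul_le_mul_of_nonneg_left c9 hk0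
    have q2 : (k:ℝ) * ((Bf.card : ℝ) + 2) ≤ k * leavesF.card :=
      mul_le_mul_of_nonneg_left c8 hk0
    have q3 : (3:ℝ) * leavesF.card ≤ k * leavesF.card :=
      mul_le_mul_of_nonneg_right hck hL0
    have q4 : (3:ℝ) * m ≤ k * m := mul_le_mul_of_nonneg_right hck hm0
    nlinarith [c7, q1, q2, q3, q4, cAB, c8, hcaseR, hn0, hm0]
  have hmem : ∀ i : Fin l.length, l.get i ∈ l := fun i => l.get_mem i
  refine ⟨m, hNle, fun i => (l.get i).1, fun i => (l.get i).2.1, fun i => (l.get i).2.2,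
    fun i => (hprops _ (hmem i)).1, fun i => (hprops _ (hmem i)).2.1, ?_, ?_⟩
  · intro i
    refine bare_of_small _ (hprops _ (hmem i)).1 ?_
    intro w hw
    have hwA := (hprops _ (hmem i)).2.2 w hw
    exact (Finset.mem_filter.mp hwA).2
  · rw [List.pairwise_iff_get] at hpw
    intro i j hne
    rcases hne.lt_or_gt with h | h
    · exact hpw i j h
    · exact fun a ha hb => hpw j i h hb ha
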